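/- Let q be an element of a field of characteristic zero that is not a root of unity, let N ≥ 2 and h ≥ 1 be integers, and suppose that either h(N-1) = 1, or there exist t ∈ ℕ and s ∈ ℕ₀ such that (q₀ q^{1-h(N-1)})^{-t} = q₀² q^{h} where q₀ is a primitive N-th root of unity and the equality forces matching powers of q. Then either N = 2 and h ∈ {1, 2}, or N = 3 and h = 1. -/
import Mathlib

lemma zpow_eq_one_forces {k : Type*} [Field k] {q : k}
    (hq : ∀ n : ℕ, 0 < n → q ^ n ≠ 1) {a : ℤ} (ha : q ^ a = 1) : a = 0 := by
  by_contra hne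
  apply hq a.natAbs (Int.natAbs_pos.mpr hne)
  have h1 : q ^ (a.natAbs : ℤ) = 1 := by
    rcases Int.natAbs_eq a with hcase | hcase
    · rw [← hcase, ha]
    · rw [hcase] at ha
      rw [zpow_neg] at ha
      rw [inv_eq_one] at ha
      exact ha
  rwa [zpow_natCast] at h1

set_option maxHeartbeats 1000000 in
/-- Scalar analysis underlying Lemma 3.3 of the paper: if `q₀` is a primitive `N`-th root of
unity (`N ≥ 2`), `q` is not a root of unity, `h ≥ 1`, and either `h(N-1) = 1` or
`(q₀ q^{1-h(N-1)})^{-t} = q₀² q^h` for some `t ≥ 1`, then `(N, h) ∈ {(2,1), (2,2), (3,1)}`. -/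
theorem semigeneric_reflection_analysis {k : Type*} [Field k] [CharZero k]
    (q q₀ : k) (hq0 : q ≠ 0) (hq : ∀ n : ℕ, 0 < n → q ^ n ≠ 1)
    (N : ℕ) (hN : 2 ≤ N) (hq₀ : IsPrimitiveRoot q₀ N)
    (h : ℕ) (hh : 1 ≤ h)
    (hyp : h * (N - 1) = 1 ∨
      ∃ t : ℕ, 0 < t ∧
        ((q₀ * q ^ ((1 : ℤ) - (h : ℤ) * ((N : ℤ) - 1)))⁻¹) ^ t = q₀ ^ 2 * q ^ h) :
    (N = 2 ∧ (h = 1 ∨ h = 2)) ∨ (N = 3 ∧ h = 1) := by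
  rcases hyp with h1 | ⟨t, ht, heq⟩
  · have hh1 := Nat.eq_one_of_mul_eq_one_right h1
    have hN1 := Nat.eq_one_of_mul_eq_one_left h1
    left; omega
  · have hq₀0 : q₀ ≠ 0 := hq₀.ne_zero (by omega)
    set e : ℤ := (1 : ℤ) - (h : ℤ) * ((N : ℤ) - 1) with he
    have hNone : q₀ ^ N = 1 := hq₀.pow_eq_one
    -- Raise heq to the N-th power
    have h2 : (((q₀ * q ^ e)⁻¹) ^ t) ^ N = (q₀ ^ 2 * q ^ h) ^ N := by rw [heq]
    have hLHS : (((q₀ * q ^ e)⁻¹) ^ t) ^ N = q ^ (-(e * t * N)) := by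
      rw [← pow_mul, inv_pow, mul_pow, ← zpow_natCast (q ^ e), ← zpow_mul,
        show t * N = N * t from mul_comm t N, pow_mul, hNone, one_pow, one_mul,
        ← zpow_neg]
      push_cast
      ring_nf
    have hRHS : (q₀ ^ 2 * q ^ h) ^ N = q ^ ((h : ℤ) * N) := by
      rw [mul_pow, ← pow_mul, show 2 * N = N * 2 from mul_comm 2 N, pow_mul, hNone,
        one_pow, one_mul, ← pow_mul, ← zpow_natCast]
      push_cast
      ring_nf
    have hkey : q ^ (-(e * t * N) - (h : ℤ) * N) = 1 := by
      rw [zpow_sub₀ hq0, hLHS.symm.trans (h2.trans hRHS), div_self]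
      exact zpow_ne_zero _ hq0
    have hA : -(e * t * N) - (h : ℤ) * N = 0 := zpow_eq_one_forces hq hkey
    -- arithmetic
    have hN0 : (N : ℤ) ≠ 0 := by exact_mod_cast (by omega : N ≠ 0)
    have hfac : (-(e * t) - (h : ℤ)) * N = 0 := by linarith [hA]
    have hmain : (t : ℤ) * ((h : ℤ) * ((N : ℤ) - 1) - 1) = (h : ℤ) := by
      have := mul_eq_zero.mp hfac
      rcases this with h' | h'
      · rw [he] at h'; nlinarith [h']
      · exact absurd h' hN0
    -- Now pure integer arithmetic
    set T : ℤ := (t : ℤ) with hT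
    set H : ℤ := (h : ℤ) with hH
    set M : ℤ := (N : ℤ) - 1 with hM
    have hT1 : 1 ≤ T := by omega
    have hH1 : 1 ≤ H := by omega
    have hM1 : 1 ≤ M := by rw [hM]; omega
    have hHM1 : 1 ≤ H * M := by nlinarith
    have hHM2 : 2 ≤ H * M := by
      rcases eq_or_lt_of_le hHM1 with h' | h'
      · exfalso; nlinarith [hmain]
      · omega
    have hle : H * M - 1 ≤ H := by nlinarith [hmain]
    rcases eq_or_lt_of_le hM1 with hMc | hMc
    · -- M = 1
      have hmain1 : T * (H - 1) = H := by rw [← hMc] at hmain; linarith [hmain]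
      have hH2 : 2 ≤ H := by nlinarith
      have hHeq2 : H = 2 := by
        rcases eq_or_lt_of_le hT1 with hTc | hTc
        · exfalso; rw [← hTc] at hmain1; linarith
        · nlinarith
      left; constructor <;> omega
    · -- M ≥ 2
      have h2H : H * 2 ≤ H * M := by
        have := mul_le_mul_of_nonneg_left (show (2:ℤ) ≤ M by omega) (show (0:ℤ) ≤ H by linarith)
        linarith
      have hHe1 : H = 1 := by linarith
      have hMe2 : M = 2 := by
        rw [hHe1] at hle; linarith
      right; constructor <;> omega
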